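/- Suppose A and B are d×d positive definite real matrices with A ⪰ B (i.e., A − B is positive semidefinite). Then for every x ∈ ℝ^d, ‖x‖_{B^{-1}} ≤ ‖x‖_{A^{-1}} · √(det(A)/det(B)), where ‖x‖_M := √(xᵀ M x). -/

import Mathlib

open Matrix

-- Lemma 1: Hermitian N with N - 1 psd has det ≥ 1
lemma aux_one_le_det {d : ℕ} {N : Matrix (Fin d) (Fin d) ℝ} (hN : N.IsHermitian)
    (h1 : (N - 1).PosSemidef) : 1 ≤ N.det := by
  have hdet : N.det = ∏ i, hN.eigenvalues i := by
    simpa using hN.det_eq_prod_eigenvalues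
  rw [hdet]
  calc (1:ℝ) = ∏ _i : Fin d, 1 := by simp
    _ ≤ ∏ i, hN.eigenvalues i := Finset.prod_le_prod (fun i _ => zero_le_one) (fun i _ => ?_)
  set v : Fin d → ℝ := ⇑(hN.eigenvectorBasis i) with hv
  have hvv : v ⬝ᵥ v = 1 := by
    have hnorm := hN.eigenvectorBasis.orthonormal.1 i
    have : (v ⬝ᵥ v) = ‖hN.eigenvectorBasis i‖ ^ 2 := by
      rw [← real_inner_self_eq_norm_sq]
      simp [EuclideanSpace.inner_eq_star_dotProduct, dotProduct, WithLp.equiv, hv]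
      have h := real_inner_self_eq_norm_sq (hN.eigenvectorBasis i)
      rw [hnorm, one_pow, PiLp.inner_apply] at h
      simp only [RCLike.inner_apply, conj_trivial] at h
      exact h
    rw [this, hnorm]; norm_num
  have h2 := h1.dotProduct_mulVec_nonneg v
  have heig : hN.eigenvalues i = v ⬝ᵥ N *ᵥ v := by
    simpa [hv] using hN.eigenvalues_eq i
  rw [sub_mulVec, one_mulVec, dotProduct_sub] at h2
  simp only [star_trivial, RCLike.re_to_real] at h2
  rw [heig]
  linarith [h2, hvv.le]

lemma aux_det_mono {d : ℕ} {A B : Matrix (Fin d) (Fin d) ℝ} (hB : B.PosDef)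
    (hAB : (A - B).PosSemidef) : B.det ≤ A.det := by
  set S := (open scoped MatrixOrder in CFC.sqrt B) with hSdef
  have hSpsd : S.PosSemidef := by open scoped MatrixOrder in exact (CFC.sqrt_nonneg B).posSemidef
  have hSS : S * S = B := by
    open scoped MatrixOrder in exact CFC.sqrt_mul_sqrt_self B hB.posSemidef.nonneg
  have hSpd : S.PosDef := by
    refine posDef_iff_dotProduct_mulVec.mpr ⟨hSpsd.1, fun y hy => lt_of_le_of_ne (hSpsd.dotProduct_mulVec_nonneg y) fun h => ?_⟩
    have hS0 : S *ᵥ y = 0 := (hSpsd.dotProduct_mulVec_zero_iff y).mp h.symm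
    have hB0 : B *ᵥ y = 0 := by rw [← hSS, ← mulVec_mulVec, hS0, mulVec_zero]
    have := hB.dotProduct_mulVec_pos hy
    rw [hB0, dotProduct_zero] at this
    exact lt_irrefl 0 this
  have hTpd : S⁻¹.PosDef := hSpd.inv
  set T := S⁻¹ with hT
  have hTS : T * S = 1 := nonsing_inv_mul S hSpd.det_pos.ne'.isUnit
  have hST : S * T = 1 := mul_nonsing_inv S hSpd.det_pos.ne'.isUnit
  have hTB : T * B * T = 1 := by
    rw [← hSS, show T * (S * S) * T = T * S * (S * T) by noncomm_ring, hTS, hST,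
      Matrix.one_mul]
  have hTherm : T.IsHermitian := hTpd.isHermitian
  have hAherm : A.IsHermitian := by
    have := hAB.isHermitian.add hB.isHermitian
    simpa using this
  have hNherm : (T * A * T).IsHermitian := by
    show (T * A * T)ᴴ = T * A * T
    rw [conjTranspose_mul, conjTranspose_mul, hTherm.eq, hAherm.eq, Matrix.mul_assoc]
  have hN1 : (T * A * T - 1).PosSemidef := by
    have : T * A * T - 1 = T * (A - B) * Tᴴ := by
      rw [hTherm.eq, Matrix.mul_sub, Matrix.sub_mul, hTB]
    rw [this]
    exact hAB.mul_mul_conjTranspose_same T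
  have hdetN : 1 ≤ (T * A * T).det := aux_one_le_det hNherm hN1
  have hdetT : T.det * T.det * B.det = 1 := by
    have := congrArg Matrix.det hTB
    simpa [det_mul, mul_comm, mul_assoc, mul_left_comm] using this
  have hdetNval : (T * A * T).det = T.det * T.det * A.det := by
    rw [det_mul, det_mul]; ring
  have hBpos := hB.det_pos
  have hT2pos : 0 < T.det * T.det := by
    nlinarith
  nlinarith [hdetN, hdetNval, hdetT]

lemma aux_det_add {d : ℕ} {B : Matrix (Fin d) (Fin d) ℝ} (hB : B.PosDef)
    (x : Fin d → ℝ) (s : ℝ) :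
    (B + s • vecMulVec x x).det = B.det * (1 + s * (x ⬝ᵥ B⁻¹ *ᵥ x)) := by
  have h1 : s • vecMulVec x x = replicateCol (Fin 1) (s • x) * replicateRow (Fin 1) x := by
    erw [← vecMulVec_eq (Fin 1)]
    ext i j
    simp [vecMulVec, mul_assoc]
  erw [h1, det_add_replicateCol_mul_replicateRow (ι := Fin 1) hB.det_pos.ne'.isUnit]
  congr 1
  have hsym : ∀ i j, B⁻¹ i j = B⁻¹ j i := fun i j => by
    conv_lhs => rw [← hB.inv.isHermitian.eq]
    simp [conjTranspose_apply]
  simp only [det_unique]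
  simp [Matrix.mul_apply, dotProduct, mulVec, Finset.mul_sum, mul_comm, mul_assoc,
    mul_left_comm]
  apply Finset.sum_congr rfl
  intro i _
  apply Finset.sum_congr rfl
  intro j _
  rw [hsym j i]

lemma aux_outer_psd {d : ℕ} (x : Fin d → ℝ) {s : ℝ} (hs : 0 ≤ s) :
    (s • vecMulVec x x).PosSemidef := by
  refine posSemidef_iff_dotProduct_mulVec.mpr ⟨?_, ?_⟩
  · ext i j
    simp [vecMulVec, conjTranspose_apply, mul_comm]
  · intro y
    have hmv : (vecMulVec x x) *ᵥ y = (x ⬝ᵥ y) • x := by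
      ext i
      simp [mulVec, vecMulVec, dotProduct, Finset.mul_sum, mul_comm, mul_assoc, mul_left_comm]
    have key : star y ⬝ᵥ (s • vecMulVec x x) *ᵥ y = s * ((x ⬝ᵥ y) * (x ⬝ᵥ y)) := by
      rw [smul_mulVec, hmv, dotProduct_smul, smul_eq_mul, dotProduct_smul, smul_eq_mul,
        star_trivial, dotProduct_comm y x]
    rw [key]
    nlinarith [sq_nonneg (x ⬝ᵥ y)]

theorem norm_ratio_det (d : ℕ) (A B : Matrix (Fin d) (Fin d) ℝ)
    (hA : A.PosDef) (hB : B.PosDef) (hAB : (A - B).PosSemidef) (x : Fin d → ℝ) :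
    Real.sqrt (x ⬝ᵥ B⁻¹ *ᵥ x) ≤ Real.sqrt (x ⬝ᵥ A⁻¹ *ᵥ x) * Real.sqrt (A.det / B.det) := by
  set a := x ⬝ᵥ A⁻¹ *ᵥ x with ha_def
  set b := x ⬝ᵥ B⁻¹ *ᵥ x with hb_def
  set r := A.det / B.det with hr_def
  have hdB := hB.det_pos
  have hdA := hA.det_pos
  have ha0 : 0 ≤ a := by simpa using hA.inv.posSemidef.dotProduct_mulVec_nonneg x
  have key : ∀ s : ℝ, 0 < s → B.det * (1 + s * b) ≤ A.det * (1 + s * a) := by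
    intro s hs
    have hX : (s • vecMulVec x x).PosSemidef := aux_outer_psd x hs.le
    have h1 : (B + s • vecMulVec x x).PosDef := hB.add_posSemidef hX
    have h2 : ((A + s • vecMulVec x x) - (B + s • vecMulVec x x)).PosSemidef := by
      have he : (A + s • vecMulVec x x) - (B + s • vecMulVec x x) = A - B := by abel
      rw [he]; exact hAB
    have hmono := aux_det_mono h1 h2
    rwa [aux_det_add hB, aux_det_add hA] at hmono
  have hr' : B.det ≤ A.det := aux_det_mono hB hAB
  have hr1 : 1 ≤ r := (one_le_div hdB).mpr hr'
  have hba : b ≤ a * r := by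
    refine le_of_forall_pos_le_add fun ε hε => ?_
    set s : ℝ := (r - 1) / ε + 1 with hs_def
    have hs : 0 < s :=
      add_pos_of_nonneg_of_pos (div_nonneg (by linarith) hε.le) one_pos
    have hk := key s hs
    have h1 : 1 + s * b ≤ r * (1 + s * a) := by
      rw [hr_def, div_mul_eq_mul_div, le_div_iff₀ hdB]
      nlinarith [hk]
    have hεs : ε * s = (r - 1) + ε := by
      rw [hs_def]
      field_simp
    nlinarith [h1, hs, hε]
  calc Real.sqrt b ≤ Real.sqrt (a * r) := Real.sqrt_le_sqrt hba
    _ = Real.sqrt a * Real.sqrt r := Real.sqrt_mul ha0 r
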